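/- (Corollary 3.) Let w : [0,T) → W be a C¹ solution of the combinatorial Yamabe flow dw_i(t)/dt = B_i(w(t)). Then the function t ↦ Σ_{i=1}^n B_i(w(t))² is strictly decreasing in t; indeed (1/2) d/dt Σ_{i=1}^n B_i(w(t))² equals the sum over faces ijk ∈ F of the quadratic form (B_i,B_j,B_k) · ∂(θ^i_jk,θ^j_ki,θ^k_ij)/∂(w_i,w_j,w_k) · (B_i,B_j,B_k)ᵀ, which is strictly negative since each such Jacobian is negative definite and each B_i > 0. -/

import Mathlib

open Real Filter Set

/-- Inverse hyperbolic cosine. -/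
noncomputable def arcosh (x : ℝ) : ℝ := Real.log (x + Real.sqrt (x ^ 2 - 1))

/-- The length of the side of a right-angled hyperbolic hexagon opposite the side of
length `x`, where the three pairwise non-adjacent sides have lengths `x, y, z`. -/
noncomputable def theta (x y z : ℝ) : ℝ :=
  _root_.arcosh ((Real.cosh x + Real.cosh y * Real.cosh z) / (Real.sinh y * Real.sinh z))

/-- Combinatorial data of an ideally triangulated compact surface with `n` boundary
components, together with a fixed hyperbolic metric `l⁰` assigning a positive length
to each edge.  Boundary components are indexed by `Fin n`; each face is a triple of
pairwise distinct boundary indices; every boundary index occurs in at least one face. -/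
structure IdealTriangulatedSurface (n : ℕ) where
  /-- The set of faces (ideal triangles), each recorded by the triple of boundary
  components it meets. -/
  F : Finset (Fin n × Fin n × Fin n)
  /-- The three boundary indices of a face are pairwise distinct. -/
  distinct : ∀ f ∈ F, f.1 ≠ f.2.1 ∧ f.2.1 ≠ f.2.2 ∧ f.2.2 ≠ f.1
  /-- Every boundary component meets some face. -/
  covers : ∀ i : Fin n, ∃ f ∈ F, i = f.1 ∨ i = f.2.1 ∨ i = f.2.2
  /-- The fixed hyperbolic metric: the length `l⁰_ij > 0` of the edge `ij`. -/
  l0 : Fin n → Fin n → ℝ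
  l0_symm : ∀ i j, l0 i j = l0 j i
  l0_pos : ∀ i j, 0 < l0 i j

namespace IdealTriangulatedSurface

variable {n : ℕ} (S : IdealTriangulatedSurface n)

/-- `i j` is an edge of the ideal triangulation: `i ≠ j` and some face contains
both boundary indices `i` and `j`. -/
def IsEdge (i j : Fin n) : Prop :=
  i ≠ j ∧ ∃ f ∈ S.F, (i = f.1 ∨ i = f.2.1 ∨ i = f.2.2) ∧ (j = f.1 ∨ j = f.2.1 ∨ j = f.2.2)

/-- The space `W` of combinatorial conformal factors: those `w : Fin n → ℝ` with
`w_i + w_j > −log cosh (l⁰_ij / 2)` for every edge `ij`, i.e. those for which every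
deformed edge length `l_ij(w)` is defined and positive. -/
def W : Set (Fin n → ℝ) :=
  {w | ∀ i j : Fin n, S.IsEdge i j →
    -Real.log (Real.cosh (S.l0 i j / 2)) < w i + w j}

/-- The deformed edge length `l_ij(w)`, defined by
`cosh (l_ij(w)/2) = e^{w_i + w_j} cosh (l⁰_ij/2)`. -/
noncomputable def len (w : Fin n → ℝ) (i j : Fin n) : ℝ :=
  2 * _root_.arcosh (Real.exp (w i + w j) * Real.cosh (S.l0 i j / 2))

/-- `θ^i_jk(w)`: the length of the boundary arc on boundary component `i` of the
right-angled hexagon realizing the face `ijk` in the metric determined by `w`. -/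
noncomputable def thetaF (w : Fin n → ℝ) (i j k : Fin n) : ℝ :=
  theta (S.len w j k) (S.len w k i) (S.len w i j)

/-- `B_i(w)`: the length of the boundary component `i`, the sum over all faces
containing `i` of the boundary arc `θ^i` of that face. -/
noncomputable def Blen (w : Fin n → ℝ) (i : Fin n) : ℝ :=
  ∑ f ∈ S.F,
    ((if i = f.1 then S.thetaF w f.1 f.2.1 f.2.2 else 0)
      + (if i = f.2.1 then S.thetaF w f.2.1 f.2.2 f.1 else 0)
      + (if i = f.2.2 then S.thetaF w f.2.2 f.1 f.2.1 else 0))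

end IdealTriangulatedSurface

lemma arcosh_pos {x : ℝ} (hx : 1 < x) : 0 < _root_.arcosh x := by
  unfold _root_.arcosh
  apply Real.log_pos
  have : 0 ≤ Real.sqrt (x^2-1) := Real.sqrt_nonneg _
  linarith

lemma cosh_arcosh {x : ℝ} (hx : 1 ≤ x) : Real.cosh (_root_.arcosh x) = x := by
  unfold _root_.arcosh
  have h1 : 0 ≤ x^2 - 1 := by nlinarith
  have hs : Real.sqrt (x^2-1) ^ 2 = x^2-1 := Real.sq_sqrt h1
  have hpos : 0 < x + Real.sqrt (x^2-1) := by
    have := Real.sqrt_nonneg (x^2-1); linarith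
  rw [Real.cosh_eq, Real.exp_log hpos, Real.exp_neg, Real.exp_log hpos]
  field_simp
  nlinarith [hs]

lemma hasDerivAt_arcosh {x : ℝ} (hx : 1 < x) : HasDerivAt _root_.arcosh (1 / Real.sqrt (x^2 - 1)) x := by
  have h1 : 0 < x^2 - 1 := by nlinarith
  have hs : Real.sqrt (x^2-1) ^ 2 = x^2-1 := Real.sq_sqrt h1.le
  have hs0 : 0 < Real.sqrt (x^2-1) := Real.sqrt_pos.2 h1
  have hd1 : HasDerivAt (fun y : ℝ => y^2 - 1) (2*x) x := by
    simpa using (hasDerivAt_pow 2 x).sub_const 1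
  have hd2 : HasDerivAt (fun y : ℝ => Real.sqrt (y^2-1)) (2*x / (2*Real.sqrt (x^2-1))) x :=
    hd1.sqrt h1.ne'
  have hd3 : HasDerivAt (fun y : ℝ => y + Real.sqrt (y^2-1)) (1 + 2*x/(2*Real.sqrt (x^2-1))) x :=
    (hasDerivAt_id x).add hd2
  have hpos : 0 < x + Real.sqrt (x^2-1) := by linarith
  have hd4 := hd3.log hpos.ne'
  unfold _root_.arcosh
  convert hd4 using 1
  field_simp
  nlinarith [hs]

noncomputable def dth (a b c a' b' c' : ℝ) : ℝ :=
  ((a' + b'*c + b*c') - (a + b*c) * (b*b'/(b^2-1) + c*c'/(c^2-1))) /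
    Real.sqrt (a^2 + b^2 + c^2 + 2*a*b*c - 1)

lemma h_pos {a b c : ℝ} (ha : 1 < a) (hb : 1 < b) (hc : 1 < c) :
    0 < a^2+b^2+c^2+2*a*b*c-1 := by
  have h1 : 1 < a*b := by nlinarith
  have h2 : 1 < a*b*c := by nlinarith
  nlinarith

lemma F_gt_one {a b c : ℝ} (ha : 1 < a) (hb : 1 < b) (hc : 1 < c) :
    1 < (a + b*c) / (Real.sqrt (b^2-1) * Real.sqrt (c^2-1)) := by
  have hb1 : 0 < b^2-1 := by nlinarith
  have hc1 : 0 < c^2-1 := by nlinarith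
  have hsb : Real.sqrt (b^2-1) < b := by
    have h := Real.sqrt_lt_sqrt hb1.le (show b^2-1 < b^2 by linarith)
    rwa [Real.sqrt_sq (by linarith : (0:ℝ) ≤ b)] at h
  have hsc : Real.sqrt (c^2-1) < c := by
    have h := Real.sqrt_lt_sqrt hc1.le (show c^2-1 < c^2 by linarith)
    rwa [Real.sqrt_sq (by linarith : (0:ℝ) ≤ c)] at h
  have hd : 0 < Real.sqrt (b^2-1) * Real.sqrt (c^2-1) :=
    mul_pos (Real.sqrt_pos.2 hb1) (Real.sqrt_pos.2 hc1)
  rw [one_lt_div hd]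
  have : Real.sqrt (b^2-1) * Real.sqrt (c^2-1) < b * c :=
    mul_lt_mul'' hsb hsc (Real.sqrt_nonneg _) (Real.sqrt_nonneg _)
  nlinarith

lemma keyHD {s : Set ℝ} {t : ℝ} {P Q R : ℝ → ℝ} {P' Q' R' : ℝ}
    (hP : HasDerivWithinAt P P' s t) (hQ : HasDerivWithinAt Q Q' s t)
    (hR : HasDerivWithinAt R R' s t)
    (hP1 : 1 < P t) (hQ1 : 1 < Q t) (hR1 : 1 < R t) :
    HasDerivWithinAt
      (fun τ => _root_.arcosh ((P τ + Q τ * R τ) /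
        (Real.sqrt ((Q τ)^2 - 1) * Real.sqrt ((R τ)^2 - 1))))
      (dth (P t) (Q t) (R t) P' Q' R') s t := by
  have hQ2 : 0 < (Q t)^2 - 1 := by nlinarith
  have hR2 : 0 < (R t)^2 - 1 := by nlinarith
  have hu0 : 0 < Real.sqrt ((Q t)^2-1) := Real.sqrt_pos.2 hQ2
  have hv0 : 0 < Real.sqrt ((R t)^2-1) := Real.sqrt_pos.2 hR2
  have hdQ : HasDerivWithinAt (fun τ => (Q τ)^2 - 1) (2*Q t*Q') s t := by
    have := (hQ.pow 2).sub_const 1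
    exact this.congr_deriv (by ring)
  have hdR : HasDerivWithinAt (fun τ => (R τ)^2 - 1) (2*R t*R') s t := by
    have := (hR.pow 2).sub_const 1
    exact this.congr_deriv (by ring)
  have hsQ := hdQ.sqrt hQ2.ne'
  have hsR := hdR.sqrt hR2.ne'
  have hden := hsQ.mul hsR
  have hnum := hP.add (hQ.mul hR)
  have hden0 : Real.sqrt ((Q t)^2-1) * Real.sqrt ((R t)^2-1) ≠ 0 := (mul_pos hu0 hv0).ne'
  have hF := hnum.div hden hden0
  have hF1 : 1 < (P t + Q t * R t) / (Real.sqrt ((Q t)^2-1) * Real.sqrt ((R t)^2-1)) :=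
    F_gt_one hP1 hQ1 hR1
  have harc := (_root_.hasDerivAt_arcosh hF1).comp_hasDerivWithinAt t hF
  refine harc.congr_deriv (Eq.symm ?_)
  simp only [Pi.add_apply, Pi.mul_apply, Pi.div_apply]
  -- now the equality of derivative formulas
  set A := P t; set B := Q t; set C := R t
  set u := Real.sqrt (B^2-1) with hu_def
  set v := Real.sqrt (C^2-1) with hv_def
  have hu : u^2 = B^2-1 := Real.sq_sqrt hQ2.le
  have hv : v^2 = C^2-1 := Real.sq_sqrt hR2.le
  have hh : 0 < A^2+B^2+C^2+2*A*B*C-1 := h_pos hP1 hQ1 hR1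
  set w := Real.sqrt (A^2+B^2+C^2+2*A*B*C-1) with hw_def
  have hw : w^2 = A^2+B^2+C^2+2*A*B*C-1 := Real.sq_sqrt hh.le
  have hw0 : 0 < w := Real.sqrt_pos.2 hh
  have hFsq : ((A + B*C)/(u*v))^2 - 1 = (w/(u*v))^2 := by
    field_simp
    nlinarith [hu, hv, hw]
  have hsF : Real.sqrt (((A + B*C)/(u*v))^2 - 1) = w/(u*v) := by
    rw [hFsq, Real.sqrt_sq (by positivity)]
  rw [dth, hsF]
  rw [← hw_def]
  rw [← hu, ← hv]
  field_simp
  ring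

lemma neg_helper {L M K : ℝ} (h : L * M = -K) (hM : 0 < M) (hK : 0 < K) : L < 0 := by
  nlinarith

lemma core {a b c v1 v2 v3 : ℝ} (ha : 1 < a) (hb : 1 < b) (hc : 1 < c)
    (h1 : 0 < v1) (h2 : 0 < v2) (h3 : 0 < v3) :
    v1 * dth a b c (2*(a+1)*(v2+v3)) (2*(b+1)*(v3+v1)) (2*(c+1)*(v1+v2))
      + v2 * dth b c a (2*(b+1)*(v3+v1)) (2*(c+1)*(v1+v2)) (2*(a+1)*(v2+v3))
      + v3 * dth c a b (2*(c+1)*(v1+v2)) (2*(a+1)*(v2+v3)) (2*(b+1)*(v3+v1)) < 0 := by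
  have hh : 0 < a^2+b^2+c^2+2*a*b*c-1 := h_pos ha hb hc
  have ha2 : 0 < a^2-1 := by nlinarith
  have hb2 : 0 < b^2-1 := by nlinarith
  have hc2 : 0 < c^2-1 := by nlinarith
  have ha1 : (0:ℝ) < a-1 := by linarith
  have hb1 : (0:ℝ) < b-1 := by linarith
  have hc1 : (0:ℝ) < c-1 := by linarith
  unfold dth
  rw [show b^2+c^2+a^2+2*b*c*a-1 = a^2+b^2+c^2+2*a*b*c-1 by ring,
      show c^2+a^2+b^2+2*c*a*b-1 = a^2+b^2+c^2+2*a*b*c-1 by ring]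
  set w := Real.sqrt (a^2+b^2+c^2+2*a*b*c-1) with hw_def
  have hw : w^2 = a^2+b^2+c^2+2*a*b*c-1 := Real.sq_sqrt hh.le
  have hw0 : 0 < w := Real.sqrt_pos.2 hh
  have hSOS : 0 < (a+b)*(a-1)*(b-1)*(v1+v2)^2 + (a+c)*(a-1)*(c-1)*(v1+v3)^2
      + (b+c)*(b-1)*(c-1)*(v2+v3)^2
      + (a-1)*(b-1)*(c-1)*((v1-v2)^2+(v1-v3)^2+(v2-v3)^2)
      + 2*(a-1)*(b-1)*(c-1)*((a-1)*v1^2+(b-1)*v2^2+(c-1)*v3^2) := by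
    have t1 : 0 < (a+b)*(a-1)*(b-1)*(v1+v2)^2 :=
      mul_pos (mul_pos (mul_pos (by linarith) ha1) hb1) (by positivity)
    have t2 : 0 < (a+c)*(a-1)*(c-1)*(v1+v3)^2 :=
      mul_pos (mul_pos (mul_pos (by linarith) ha1) hc1) (by positivity)
    have t3 : 0 < (b+c)*(b-1)*(c-1)*(v2+v3)^2 :=
      mul_pos (mul_pos (mul_pos (by linarith) hb1) hc1) (by positivity)
    have t4 : 0 ≤ (a-1)*(b-1)*(c-1)*((v1-v2)^2+(v1-v3)^2+(v2-v3)^2) :=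
      mul_nonneg (mul_nonneg (mul_nonneg ha1.le hb1.le) hc1.le) (by positivity)
    have t5 : 0 < 2*(a-1)*(b-1)*(c-1)*((a-1)*v1^2+(b-1)*v2^2+(c-1)*v3^2) := by
      apply mul_pos (mul_pos (mul_pos (mul_pos two_pos ha1) hb1) hc1)
      have : 0 < (a-1)*v1^2 := mul_pos ha1 (by positivity)
      have : 0 < (b-1)*v2^2 := mul_pos hb1 (by positivity)
      have : 0 < (c-1)*v3^2 := mul_pos hc1 (by positivity)
      linarith
    linarith
  refine neg_helper (M := w * ((a^2-1)*(b^2-1)*(c^2-1)))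
    (K := 2*(a+1)*(b+1)*(c+1)*((a+b)*(a-1)*(b-1)*(v1+v2)^2 + (a+c)*(a-1)*(c-1)*(v1+v3)^2
      + (b+c)*(b-1)*(c-1)*(v2+v3)^2
      + (a-1)*(b-1)*(c-1)*((v1-v2)^2+(v1-v3)^2+(v2-v3)^2)
      + 2*(a-1)*(b-1)*(c-1)*((a-1)*v1^2+(b-1)*v2^2+(c-1)*v3^2))) ?_ ?_ ?_
  · field_simp
    ring
  · exact mul_pos hw0 (mul_pos (mul_pos ha2 hb2) hc2)
  · have : (0:ℝ) < 2*(a+1)*(b+1)*(c+1) :=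
      mul_pos (mul_pos (mul_pos two_pos (by linarith)) (by linarith)) (by linarith)
    exact mul_pos this hSOS




namespace IdealTriangulatedSurface

variable {n : ℕ} (S : IdealTriangulatedSurface n)

lemma X_gt_one {u : Fin n → ℝ} (hu : u ∈ S.W) {p q : Fin n} (h : S.IsEdge p q) :
    1 < Real.exp (u p + u q) * Real.cosh (S.l0 p q / 2) := by
  have hc : 0 < Real.cosh (S.l0 p q / 2) := Real.cosh_pos _
  have h1 : -Real.log (Real.cosh (S.l0 p q / 2)) < u p + u q := hu p q h
  have h2 : Real.exp (-Real.log (Real.cosh (S.l0 p q / 2))) < Real.exp (u p + u q) :=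
    Real.exp_lt_exp.2 h1
  rw [Real.exp_neg, Real.exp_log hc] at h2
  calc (1:ℝ) = (Real.cosh (S.l0 p q / 2))⁻¹ * Real.cosh (S.l0 p q / 2) := by field_simp
  _ < Real.exp (u p + u q) * Real.cosh (S.l0 p q / 2) :=
      mul_lt_mul_of_pos_right h2 hc

lemma cosh_len {u : Fin n → ℝ} {p q : Fin n}
    (h : 1 < Real.exp (u p + u q) * Real.cosh (S.l0 p q / 2)) :
    Real.cosh (S.len u p q) = 2*(Real.exp (u p + u q) * Real.cosh (S.l0 p q / 2))^2 - 1 := by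
  unfold len
  rw [show Real.cosh (2 * _root_.arcosh (Real.exp (u p + u q) * Real.cosh (S.l0 p q / 2)))
      = 2 * Real.cosh (_root_.arcosh (Real.exp (u p + u q) * Real.cosh (S.l0 p q / 2)))^2 - 1 by
    rw [Real.cosh_two_mul, Real.sinh_sq]; ring]
  rw [_root_.cosh_arcosh h.le]

lemma len_pos {u : Fin n → ℝ} {p q : Fin n}
    (h : 1 < Real.exp (u p + u q) * Real.cosh (S.l0 p q / 2)) :
    0 < S.len u p q := by
  unfold len
  have := _root_.arcosh_pos h
  linarith

lemma sinh_len {u : Fin n → ℝ} {p q : Fin n}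
    (h : 1 < Real.exp (u p + u q) * Real.cosh (S.l0 p q / 2)) :
    Real.sinh (S.len u p q)
      = Real.sqrt ((2*(Real.exp (u p + u q) * Real.cosh (S.l0 p q / 2))^2 - 1)^2 - 1) := by
  rw [← S.cosh_len h, ← Real.sinh_sq,
    Real.sqrt_sq (Real.sinh_nonneg_iff.2 (S.len_pos h).le)]

lemma one_lt_cosh_len {u : Fin n → ℝ} {p q : Fin n}
    (h : 1 < Real.exp (u p + u q) * Real.cosh (S.l0 p q / 2)) :
    1 < Real.cosh (S.len u p q) := by
  rw [S.cosh_len h]; nlinarith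

lemma thetaF_eq {u : Fin n → ℝ} {i j k : Fin n}
    (hjk : 1 < Real.exp (u j + u k) * Real.cosh (S.l0 j k / 2))
    (hki : 1 < Real.exp (u k + u i) * Real.cosh (S.l0 k i / 2))
    (hij : 1 < Real.exp (u i + u j) * Real.cosh (S.l0 i j / 2)) :
    S.thetaF u i j k = _root_.arcosh
      (((2*(Real.exp (u j + u k) * Real.cosh (S.l0 j k / 2))^2 - 1)
        + (2*(Real.exp (u k + u i) * Real.cosh (S.l0 k i / 2))^2 - 1)
          * (2*(Real.exp (u i + u j) * Real.cosh (S.l0 i j / 2))^2 - 1))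
      / (Real.sqrt ((2*(Real.exp (u k + u i) * Real.cosh (S.l0 k i / 2))^2 - 1)^2 - 1)
          * Real.sqrt ((2*(Real.exp (u i + u j) * Real.cosh (S.l0 i j / 2))^2 - 1)^2 - 1))) := by
  unfold thetaF theta
  rw [S.cosh_len hjk, S.cosh_len hki, S.cosh_len hij, S.sinh_len hki, S.sinh_len hij]

lemma thetaF_pos {u : Fin n → ℝ} {i j k : Fin n}
    (hjk : 1 < Real.exp (u j + u k) * Real.cosh (S.l0 j k / 2))
    (hki : 1 < Real.exp (u k + u i) * Real.cosh (S.l0 k i / 2))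
    (hij : 1 < Real.exp (u i + u j) * Real.cosh (S.l0 i j / 2)) :
    0 < S.thetaF u i j k := by
  rw [S.thetaF_eq hjk hki hij]
  exact _root_.arcosh_pos (F_gt_one (by nlinarith) (by nlinarith) (by nlinarith))

lemma face_edges {f : Fin n × Fin n × Fin n} (hf : f ∈ S.F) :
    S.IsEdge f.1 f.2.1 ∧ S.IsEdge f.2.1 f.2.2 ∧ S.IsEdge f.2.2 f.1 := by
  obtain ⟨d1, d2, d3⟩ := S.distinct f hf
  exact ⟨⟨d1, f, hf, Or.inl rfl, Or.inr (Or.inl rfl)⟩,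
    ⟨d2, f, hf, Or.inr (Or.inl rfl), Or.inr (Or.inr rfl)⟩,
    ⟨d3, f, hf, Or.inr (Or.inr rfl), Or.inl rfl⟩⟩

lemma Blen_pos {u : Fin n → ℝ} (hu : u ∈ S.W) (m : Fin n) : 0 < S.Blen u m := by
  unfold Blen
  have hterm : ∀ f ∈ S.F, 0 < S.thetaF u f.1 f.2.1 f.2.2 ∧ 0 < S.thetaF u f.2.1 f.2.2 f.1
      ∧ 0 < S.thetaF u f.2.2 f.1 f.2.1 := by
    intro f hf
    obtain ⟨e1, e2, e3⟩ := S.face_edges hf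
    have x1 := S.X_gt_one hu e1
    have x2 := S.X_gt_one hu e2
    have x3 := S.X_gt_one hu e3
    exact ⟨S.thetaF_pos x2 x3 x1, S.thetaF_pos x3 x1 x2, S.thetaF_pos x1 x2 x3⟩
  apply Finset.sum_pos'
  · intro f hf
    obtain ⟨p1, p2, p3⟩ := hterm f hf
    have n1 : 0 ≤ (if m = f.1 then S.thetaF u f.1 f.2.1 f.2.2 else 0) := by
      by_cases h' : m = f.1 <;> simp [h', p1.le]
    have n2 : 0 ≤ (if m = f.2.1 then S.thetaF u f.2.1 f.2.2 f.1 else 0) := by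
      by_cases h' : m = f.2.1 <;> simp [h', p2.le]
    have n3 : 0 ≤ (if m = f.2.2 then S.thetaF u f.2.2 f.1 f.2.1 else 0) := by
      by_cases h' : m = f.2.2 <;> simp [h', p3.le]
    linarith
  · obtain ⟨f, hf, hm⟩ := S.covers m
    obtain ⟨p1, p2, p3⟩ := hterm f hf
    refine ⟨f, hf, ?_⟩
    have n1 : 0 ≤ (if m = f.1 then S.thetaF u f.1 f.2.1 f.2.2 else 0) := by
      by_cases h' : m = f.1 <;> simp [h', p1.le]
    have n2 : 0 ≤ (if m = f.2.1 then S.thetaF u f.2.1 f.2.2 f.1 else 0) := by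
      by_cases h' : m = f.2.1 <;> simp [h', p2.le]
    have n3 : 0 ≤ (if m = f.2.2 then S.thetaF u f.2.2 f.1 f.2.1 else 0) := by
      by_cases h' : m = f.2.2 <;> simp [h', p3.le]
    rcases hm with h | h | h
    · have : (if m = f.1 then S.thetaF u f.1 f.2.1 f.2.2 else 0)
          = S.thetaF u f.1 f.2.1 f.2.2 := if_pos h
      rw [this] at n1 ⊢ <;> linarith
    · have : (if m = f.2.1 then S.thetaF u f.2.1 f.2.2 f.1 else 0)
          = S.thetaF u f.2.1 f.2.2 f.1 := if_pos h
      rw [this] at n2 ⊢ <;> linarith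
    · have : (if m = f.2.2 then S.thetaF u f.2.2 f.1 f.2.1 else 0)
          = S.thetaF u f.2.2 f.1 f.2.1 := if_pos h
      rw [this] at n3 ⊢ <;> linarith

lemma theta_hasDeriv {T : ℝ} {w : ℝ → (Fin n → ℝ)}
    (hmem : ∀ τ ∈ Set.Ico (0 : ℝ) T, w τ ∈ S.W)
    (hflow : ∀ τ ∈ Set.Ico (0 : ℝ) T, ∀ i : Fin n,
      HasDerivWithinAt (fun s => w s i) (S.Blen (w τ) i) (Set.Ico 0 T) τ)
    {t : ℝ} (ht : t ∈ Set.Ico (0 : ℝ) T) {i j k : Fin n}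
    (hjk : S.IsEdge j k) (hki : S.IsEdge k i) (hij : S.IsEdge i j) :
    HasDerivWithinAt (fun τ => S.thetaF (w τ) i j k)
      (dth (Real.cosh (S.len (w t) j k)) (Real.cosh (S.len (w t) k i))
        (Real.cosh (S.len (w t) i j))
        (2*(Real.cosh (S.len (w t) j k)+1)*(S.Blen (w t) j + S.Blen (w t) k))
        (2*(Real.cosh (S.len (w t) k i)+1)*(S.Blen (w t) k + S.Blen (w t) i))
        (2*(Real.cosh (S.len (w t) i j)+1)*(S.Blen (w t) i + S.Blen (w t) j)))
      (Set.Ico 0 T) t := by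
  set P : ℝ → ℝ := fun τ => 2*(Real.exp (w τ j + w τ k) * Real.cosh (S.l0 j k / 2))^2 - 1
    with hP_def
  set Q : ℝ → ℝ := fun τ => 2*(Real.exp (w τ k + w τ i) * Real.cosh (S.l0 k i / 2))^2 - 1
    with hQ_def
  set R : ℝ → ℝ := fun τ => 2*(Real.exp (w τ i + w τ j) * Real.cosh (S.l0 i j / 2))^2 - 1
    with hR_def
  have hXP : ∀ τ ∈ Set.Ico (0:ℝ) T, 1 < Real.exp (w τ j + w τ k) * Real.cosh (S.l0 j k / 2) :=
    fun τ hτ => S.X_gt_one (hmem τ hτ) hjk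
  have hXQ : ∀ τ ∈ Set.Ico (0:ℝ) T, 1 < Real.exp (w τ k + w τ i) * Real.cosh (S.l0 k i / 2) :=
    fun τ hτ => S.X_gt_one (hmem τ hτ) hki
  have hXR : ∀ τ ∈ Set.Ico (0:ℝ) T, 1 < Real.exp (w τ i + w τ j) * Real.cosh (S.l0 i j / 2) :=
    fun τ hτ => S.X_gt_one (hmem τ hτ) hij
  have hP1 : 1 < P t := by rw [hP_def]; have := hXP t ht; simp only; nlinarith
  have hQ1 : 1 < Q t := by rw [hQ_def]; have := hXQ t ht; simp only; nlinarith
  have hR1 : 1 < R t := by rw [hR_def]; have := hXR t ht; simp only; nlinarith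
  have hdP : HasDerivWithinAt P (2*(P t + 1)*(S.Blen (w t) j + S.Blen (w t) k))
      (Set.Ico 0 T) t := by
    have hsum : HasDerivWithinAt (fun τ => w τ j + w τ k)
        (S.Blen (w t) j + S.Blen (w t) k) (Set.Ico 0 T) t :=
      (hflow t ht j).add (hflow t ht k)
    have h2 := (((hsum.exp.mul_const (Real.cosh (S.l0 j k / 2))).pow 2).const_mul 2).sub_const 1
    refine h2.congr_deriv ?_
    rw [hP_def]; simp only; ring
  have hdQ : HasDerivWithinAt Q (2*(Q t + 1)*(S.Blen (w t) k + S.Blen (w t) i))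
      (Set.Ico 0 T) t := by
    have hsum : HasDerivWithinAt (fun τ => w τ k + w τ i)
        (S.Blen (w t) k + S.Blen (w t) i) (Set.Ico 0 T) t :=
      (hflow t ht k).add (hflow t ht i)
    have h2 := (((hsum.exp.mul_const (Real.cosh (S.l0 k i / 2))).pow 2).const_mul 2).sub_const 1
    refine h2.congr_deriv ?_
    rw [hQ_def]; simp only; ring
  have hdR : HasDerivWithinAt R (2*(R t + 1)*(S.Blen (w t) i + S.Blen (w t) j))
      (Set.Ico 0 T) t := by
    have hsum : HasDerivWithinAt (fun τ => w τ i + w τ j)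
        (S.Blen (w t) i + S.Blen (w t) j) (Set.Ico 0 T) t :=
      (hflow t ht i).add (hflow t ht j)
    have h2 := (((hsum.exp.mul_const (Real.cosh (S.l0 i j / 2))).pow 2).const_mul 2).sub_const 1
    refine h2.congr_deriv ?_
    rw [hR_def]; simp only; ring
  have key := keyHD hdP hdQ hdR hP1 hQ1 hR1
  have heq : ∀ τ ∈ Set.Ico (0:ℝ) T, S.thetaF (w τ) i j k
      = _root_.arcosh ((P τ + Q τ * R τ) /
        (Real.sqrt ((Q τ)^2 - 1) * Real.sqrt ((R τ)^2 - 1))) := by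
    intro τ hτ
    rw [S.thetaF_eq (hXP τ hτ) (hXQ τ hτ) (hXR τ hτ)]
  have hres := key.congr heq (heq t ht)
  have eP : Real.cosh (S.len (w t) j k) = P t := S.cosh_len (hXP t ht)
  have eQ : Real.cosh (S.len (w t) k i) = Q t := S.cosh_len (hXQ t ht)
  have eR : Real.cosh (S.len (w t) i j) = R t := S.cosh_len (hXR t ht)
  rw [eP, eQ, eR]
  exact hres

end IdealTriangulatedSurface

/-- Corollary 3: along any `C¹` solution `w : [0,T) → W` of the
combinatorial Yamabe flow `dw_i/dt = B_i(w(t))`, the quantity `∑_{i=1}^n B_i(w(t))²`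
is strictly decreasing; indeed `(1/2) d/dt ∑ B_i²` equals a strictly negative
quantity (a sum over faces of values of negative definite quadratic forms at the
positive vector of boundary lengths). -/
theorem stmt_14 {n : ℕ} (hn : 1 ≤ n) (S : IdealTriangulatedSurface n)
    (T : ℝ) (w : ℝ → (Fin n → ℝ))
    (hmem : ∀ t ∈ Set.Ico (0 : ℝ) T, w t ∈ S.W)
    (hflow : ∀ t ∈ Set.Ico (0 : ℝ) T, ∀ i : Fin n,
      HasDerivWithinAt (fun s => w s i) (S.Blen (w t) i) (Set.Ico 0 T) t) :
    StrictAntiOn (fun t => ∑ i, (S.Blen (w t) i) ^ 2) (Set.Ico 0 T) ∧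
    ∀ t ∈ Set.Ico (0 : ℝ) T, ∃ D : ℝ, D < 0 ∧
      HasDerivWithinAt (fun s => (1 / 2) * ∑ i, (S.Blen (w s) i) ^ 2) D
        (Set.Ico 0 T) t := by
  classical
  have main : ∀ t ∈ Set.Ico (0 : ℝ) T, ∃ D₀ : ℝ, D₀ < 0 ∧
      HasDerivWithinAt (fun s => ∑ i, (S.Blen (w s) i) ^ 2) (2 * D₀) (Set.Ico 0 T) t := by
    intro t ht
    set B : Fin n → ℝ := S.Blen (w t) with hB_def
    have hBpos : ∀ m, 0 < B m := fun m => S.Blen_pos (hmem t ht) m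
    set dθ : Fin n → Fin n → Fin n → ℝ := fun i j k =>
      dth (Real.cosh (S.len (w t) j k)) (Real.cosh (S.len (w t) k i))
        (Real.cosh (S.len (w t) i j))
        (2*(Real.cosh (S.len (w t) j k)+1)*(B j + B k))
        (2*(Real.cosh (S.len (w t) k i)+1)*(B k + B i))
        (2*(Real.cosh (S.len (w t) i j)+1)*(B i + B j)) with hdθ_def
    refine ⟨∑ f ∈ S.F, (B f.1 * dθ f.1 f.2.1 f.2.2 + B f.2.1 * dθ f.2.1 f.2.2 f.1
        + B f.2.2 * dθ f.2.2 f.1 f.2.1), ?_, ?_⟩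
    · apply Finset.sum_neg
      · intro f hf
        obtain ⟨e1, e2, e3⟩ := S.face_edges hf
        have x1 := S.X_gt_one (hmem t ht) e1
        have x2 := S.X_gt_one (hmem t ht) e2
        have x3 := S.X_gt_one (hmem t ht) e3
        have ha := S.one_lt_cosh_len x2
        have hb := S.one_lt_cosh_len x3
        have hc := S.one_lt_cosh_len x1
        exact core ha hb hc (hBpos f.1) (hBpos f.2.1) (hBpos f.2.2)
      · obtain ⟨f, hf, _⟩ := S.covers ⟨0, hn⟩
        exact ⟨f, hf⟩
    · have hBm : ∀ m : Fin n, HasDerivWithinAt (fun τ => S.Blen (w τ) m)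
          (∑ f ∈ S.F, ((if m = f.1 then dθ f.1 f.2.1 f.2.2 else 0)
            + (if m = f.2.1 then dθ f.2.1 f.2.2 f.1 else 0)
            + (if m = f.2.2 then dθ f.2.2 f.1 f.2.1 else 0))) (Set.Ico 0 T) t := by
        intro m
        unfold IdealTriangulatedSurface.Blen
        apply HasDerivWithinAt.fun_sum
        intro f hf
        obtain ⟨e1, e2, e3⟩ := S.face_edges hf
        refine HasDerivWithinAt.add (HasDerivWithinAt.add ?_ ?_) ?_
        · by_cases h : m = f.1
          · simp only [if_pos h]
            exact S.theta_hasDeriv hmem hflow ht e2 e3 e1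
          · simp only [if_neg h]; exact hasDerivWithinAt_const t _ 0
        · by_cases h : m = f.2.1
          · simp only [if_pos h]
            exact S.theta_hasDeriv hmem hflow ht e3 e1 e2
          · simp only [if_neg h]; exact hasDerivWithinAt_const t _ 0
        · by_cases h : m = f.2.2
          · simp only [if_pos h]
            exact S.theta_hasDeriv hmem hflow ht e1 e2 e3
          · simp only [if_neg h]; exact hasDerivWithinAt_const t _ 0
      have hg := HasDerivWithinAt.fun_sum (u := Finset.univ)
        (fun m (_ : m ∈ Finset.univ) => (hBm m).fun_pow 2)
      refine hg.congr_deriv (Eq.symm ?_)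
      simp only [pow_one, Nat.cast_ofNat, Finset.mul_sum]
      rw [Finset.sum_comm]
      apply Finset.sum_congr rfl
      intro f hf
      simp only [mul_add, Finset.sum_add_distrib, mul_ite, mul_zero,
        Finset.sum_ite_eq', Finset.mem_univ, if_true]
      ring
  constructor
  · apply strictAntiOn_of_deriv_neg (convex_Ico 0 T)
    · intro x hx
      exact ((main x hx).choose_spec.2).differentiableWithinAt.continuousWithinAt
    · intro x hx
      rw [interior_Ico] at hx
      obtain ⟨D₀, hneg, hd⟩ := main x (Set.Ioo_subset_Ico_self hx)
      have h2 := hd.hasDerivAt (Ico_mem_nhds hx.1 hx.2)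
      rw [h2.deriv]
      linarith
  · intro t ht
    obtain ⟨D₀, hneg, hd⟩ := main t ht
    refine ⟨D₀, hneg, ?_⟩
    have h2 := hd.const_mul (1/2 : ℝ)
    refine h2.congr_deriv ?_
    ring
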